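/- Let s ≥ 1 and n ≥ 1 be integers, let g, Δ : {1,…,s} → ℕ satisfy Σ_{i=1}^s g_i = n, g_1 = 1, Δ_1 = 0 and Δ_s = 0, and let e ≥ 0 be a real number with g_i + Δ_i ≤ 2e for every i. Define rmin_i = Σ_{j ≤ i} g_j and rmax_i = rmin_i + Δ_i. Then for every integer r with 1 ≤ r ≤ n there exists i ∈ {1,…,s} such that max(r − rmin_i, rmax_i − r) ≤ e. -/
import Mathlib


open Finset

set_option maxHeartbeats 2000000

theorem stmt1 (s n : ℕ) (hs : 1 ≤ s) (hn : 1 ≤ n)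
    (g Δ : Fin s → ℕ) (hsum : ∑ i, g i = n)
    (hg1 : g ⟨0, hs⟩ = 1) (hΔ1 : Δ ⟨0, hs⟩ = 0)
    (hΔs : Δ ⟨s - 1, by omega⟩ = 0)
    (e : ℝ) (he : 0 ≤ e)
    (hge : ∀ i : Fin s, ((g i : ℝ) + (Δ i : ℝ)) ≤ 2 * e)
    (r : ℕ) (hr1 : 1 ≤ r) (hrn : r ≤ n) :
    ∃ i : Fin s,
      max ((r : ℝ) - (∑ j ∈ Finset.univ.filter (fun j => j ≤ i), g j : ℕ))
          (((∑ j ∈ Finset.univ.filter (fun j => j ≤ i), g j : ℕ) + (Δ i : ℝ)) - r) ≤ e := by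
  -- R at 0
  have hR0 : (∑ j ∈ Finset.univ.filter (fun j => j ≤ (⟨0, hs⟩ : Fin s)), g j) = 1 := by
    have h1 : Finset.univ.filter (fun j => j ≤ (⟨0, hs⟩ : Fin s)) = {(⟨0, hs⟩ : Fin s)} := by
      ext j
      simp only [Finset.mem_filter, Finset.mem_univ, true_and, Finset.mem_singleton,
        Fin.le_def, Fin.ext_iff]
      omega
    rw [h1, Finset.sum_singleton, hg1]
  -- successor relation
  have hsucc : ∀ (i : Fin s) (h1 : 1 ≤ i.val),
      (∑ j ∈ Finset.univ.filter (fun j => j ≤ i), g j)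
        = (∑ j ∈ Finset.univ.filter (fun j => j ≤ (⟨i.val - 1, by omega⟩ : Fin s)), g j)
          + g i := by
    intro i h1
    have hins : Finset.univ.filter (fun j => j ≤ i)
        = insert i (Finset.univ.filter (fun j => j ≤ (⟨i.val - 1, by omega⟩ : Fin s))) := by
      ext j
      simp only [Finset.mem_filter, Finset.mem_univ, true_and, Finset.mem_insert,
        Fin.le_def, Fin.ext_iff]
      omega
    have hnot : i ∉ Finset.univ.filter (fun j => j ≤ (⟨i.val - 1, by omega⟩ : Fin s)) := by
      simp only [Finset.mem_filter, Finset.mem_univ, true_and, Fin.le_def]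
      omega
    rw [hins, Finset.sum_insert hnot]
    omega
  -- R at last
  have hRlast :
      (∑ j ∈ Finset.univ.filter (fun j => j ≤ (⟨s - 1, by omega⟩ : Fin s)), g j) = n := by
    have h1 : Finset.univ.filter (fun j => j ≤ (⟨s - 1, by omega⟩ : Fin s)) = Finset.univ := by
      ext j
      simp only [Finset.mem_filter, Finset.mem_univ, true_and, Fin.le_def]
      exact iff_true_intro (Nat.le_sub_one_of_lt j.isLt)
    rw [h1, hsum]
  by_cases h : ∀ i : Fin s,
      (((∑ j ∈ Finset.univ.filter (fun j => j ≤ i), g j : ℕ) : ℝ) + (Δ i : ℝ)) ≤ r + e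
  · refine ⟨⟨s - 1, by omega⟩, ?_⟩
    have h2 := h ⟨s - 1, by omega⟩
    rw [hRlast, hΔs] at h2
    have hrn' : (r : ℝ) ≤ (n : ℝ) := by exact_mod_cast hrn
    rw [hRlast, hΔs]
    simp only [Nat.cast_zero, add_zero, max_le_iff] at h2 ⊢
    constructor <;> linarith
  · classical
    push_neg at h
    set T : Finset (Fin s) := Finset.univ.filter
      (fun i => (r : ℝ) + e <
        ((∑ j ∈ Finset.univ.filter (fun j => j ≤ i), g j : ℕ) : ℝ) + (Δ i : ℝ)) with hT
    have hTne : T.Nonempty := by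
      obtain ⟨i, hi⟩ := h
      refine ⟨i, ?_⟩
      simp only [hT, Finset.mem_filter, Finset.mem_univ, true_and]
      linarith
    obtain ⟨i, hiT, hmin⟩ := Finset.exists_min_image T id hTne
    have hiT' : (r : ℝ) + e <
        ((∑ j ∈ Finset.univ.filter (fun j => j ≤ i), g j : ℕ) : ℝ) + (Δ i : ℝ) := by
      simpa only [hT, Finset.mem_filter, Finset.mem_univ, true_and] using hiT
    have hi1 : 1 ≤ i.val := by
      by_contra hc
      have hi0 : i = ⟨0, hs⟩ := Fin.ext (show i.val = 0 by omega)
      rw [hi0, hR0, hΔ1] at hiT'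
      have hr1' : (1 : ℝ) ≤ (r : ℝ) := by exact_mod_cast hr1
      simp only [Nat.cast_one, Nat.cast_zero, add_zero] at hiT'
      linarith
    refine ⟨⟨i.val - 1, by omega⟩, ?_⟩
    set j : Fin s := ⟨i.val - 1, by omega⟩ with hj
    have hjnot :
        ((∑ k ∈ Finset.univ.filter (fun k => k ≤ j), g k : ℕ) : ℝ) + (Δ j : ℝ)
          ≤ (r : ℝ) + e := by
      by_contra hc
      push_neg at hc
      have hjT : j ∈ T := by
        simp only [hT, Finset.mem_filter, Finset.mem_univ, true_and]
        linarith
      have hle := hmin j hjT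
      simp only [id] at hle
      have hle' : i.val ≤ j.val := hle
      simp only [hj] at hle'
      omega
    have hRs : ((∑ k ∈ Finset.univ.filter (fun k => k ≤ i), g k : ℕ) : ℝ)
        = ((∑ k ∈ Finset.univ.filter (fun k => k ≤ j), g k : ℕ) : ℝ) + (g i : ℝ) := by
      have h3 := hsucc i hi1
      rw [h3]
      push_cast
      ring
    have hge' := hge i
    simp only [max_le_iff]
    constructor
    · linarith
    · linarith
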